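/- Suppose f − f* = φ₀ + Σᵢ φᵢ gᵢ + Σⱼ ψⱼ hⱼ on ℝⁿ with all functions C¹, each φᵢ (i = 0,…,l) a sum of squares of C¹ functions, and x* ∈ S a global minimizer of f on S with f(x*) = f*. Then ∇f(x*) = Σᵢ₌₁^l φᵢ(x*) ∇gᵢ(x*) + Σⱼ₌₁^m ψⱼ(x*) ∇hⱼ(x*). -/

import Mathlib

open scoped BigOperators

/-- Generalized KKT stationarity: if `f - f* = φ₀ + Σ φᵢ gᵢ + Σ ψⱼ hⱼ` with each `φᵢ` a sum of
squares of `C¹` functions, and `x*` is a global minimizer of `f` on `S`, then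
`∇f(x*) = Σ φᵢ(x*) ∇gᵢ(x*) + Σ ψⱼ(x*) ∇hⱼ(x*)`. -/
theorem sos_hasFDerivAt_zero {n : ℕ} (φ : (Fin n → ℝ) → ℝ) (x₀ : Fin n → ℝ)
    (hsos : ∃ (K : ℕ) (σ : Fin K → (Fin n → ℝ) → ℝ),
      (∀ k, ContDiff ℝ 1 (σ k)) ∧ ∀ x, φ x = ∑ k, (σ k x) ^ 2)
    (h0 : φ x₀ = 0) : HasFDerivAt φ (0 : (Fin n → ℝ) →L[ℝ] ℝ) x₀ := by
  obtain ⟨K, σ, hσ, hφ⟩ := hsos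
  have hσ0 : ∀ k, σ k x₀ = 0 := by
    intro k
    have hsum : ∑ k, (σ k x₀) ^ 2 = 0 := by rw [← hφ, h0]
    have := (Finset.sum_eq_zero_iff_of_nonneg (fun k _ => sq_nonneg (σ k x₀))).mp hsum k
      (Finset.mem_univ k)
    exact pow_eq_zero_iff (by norm_num) |>.mp this
  have : HasFDerivAt (fun x => ∑ k, (σ k x) ^ 2) (0 : (Fin n → ℝ) →L[ℝ] ℝ) x₀ := by
    have : HasFDerivAt (fun x => ∑ k, (σ k x) ^ 2)
        (∑ k : Fin K, (0 : (Fin n → ℝ) →L[ℝ] ℝ)) x₀ := by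
      apply HasFDerivAt.fun_sum
      intro k _
      have hd := ((hσ k).differentiable one_ne_zero x₀).hasFDerivAt
      have := hd.fun_mul hd
      simpa [pow_two, hσ0 k] using this
    simpa using this
  exact this.congr_of_eventuallyEq (Filter.Eventually.of_forall fun x => (hφ x))

theorem generalized_kkt_stationarity (n l m : ℕ)
    (f φ₀ : (Fin n → ℝ) → ℝ) (g : Fin l → (Fin n → ℝ) → ℝ) (h : Fin m → (Fin n → ℝ) → ℝ)
    (φ : Fin l → (Fin n → ℝ) → ℝ) (ψ : Fin m → (Fin n → ℝ) → ℝ)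
    (hf : ContDiff ℝ 1 f) (hg : ∀ i, ContDiff ℝ 1 (g i)) (hh : ∀ j, ContDiff ℝ 1 (h j))
    (hψ : ∀ j, ContDiff ℝ 1 (ψ j))
    (hφ₀sos : ∃ (K : ℕ) (σ : Fin K → (Fin n → ℝ) → ℝ),
      (∀ k, ContDiff ℝ 1 (σ k)) ∧ ∀ x, φ₀ x = ∑ k, (σ k x) ^ 2)
    (hφsos : ∀ i, ∃ (K : ℕ) (σ : Fin K → (Fin n → ℝ) → ℝ),
      (∀ k, ContDiff ℝ 1 (σ k)) ∧ ∀ x, φ i x = ∑ k, (σ k x) ^ 2)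
    (S : Set (Fin n → ℝ))
    (hS : S = {x | (∀ i, 0 ≤ g i x) ∧ (∀ j, h j x = 0)})
    (fstar : ℝ)
    (hid : ∀ x, f x - fstar = φ₀ x + ∑ i, φ i x * g i x + ∑ j, ψ j x * h j x)
    (xs : Fin n → ℝ) (hxs : xs ∈ S)
    (hmin : ∀ x ∈ S, fstar ≤ f x) (hfxs : f xs = fstar) :
    fderiv ℝ f xs = ∑ i, φ i xs • fderiv ℝ (g i) xs + ∑ j, ψ j xs • fderiv ℝ (h j) xs := by
  rw [hS] at hxs
  obtain ⟨hgpos, hhzero⟩ := hxs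
  -- nonnegativity of φ's
  have hφnn : ∀ i x, 0 ≤ φ i x := by
    intro i x
    obtain ⟨K, σ, _, hφ⟩ := hφsos i
    rw [hφ]
    exact Finset.sum_nonneg fun k _ => sq_nonneg _
  have hφ₀nn : ∀ x, 0 ≤ φ₀ x := by
    intro x
    obtain ⟨K, σ, _, hφ⟩ := hφ₀sos
    rw [hφ]
    exact Finset.sum_nonneg fun k _ => sq_nonneg _
  -- evaluate identity at xs
  have hxs0 : φ₀ xs + ∑ i, φ i xs * g i xs = 0 := by
    have := hid xs
    rw [hfxs, sub_self] at this
    have hz : ∑ j, ψ j xs * h j xs = 0 :=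
      Finset.sum_eq_zero fun j _ => by rw [hhzero j, mul_zero]
    linarith [this, hz]
  have hterm_nn : ∀ i ∈ Finset.univ, (0:ℝ) ≤ φ i xs * g i xs :=
    fun i _ => mul_nonneg (hφnn i xs) (hgpos i)
  have hsum_nn : (0:ℝ) ≤ ∑ i, φ i xs * g i xs := Finset.sum_nonneg hterm_nn
  have hφ₀0 : φ₀ xs = 0 := le_antisymm (by linarith) (hφ₀nn xs)
  have hsum0 : ∑ i, φ i xs * g i xs = 0 := by linarith
  have hcompl : ∀ i, φ i xs * g i xs = 0 := fun i =>
    (Finset.sum_eq_zero_iff_of_nonneg hterm_nn).mp hsum0 i (Finset.mem_univ i)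
  -- derivatives
  have D0 : HasFDerivAt φ₀ (0 : (Fin n → ℝ) →L[ℝ] ℝ) xs :=
    sos_hasFDerivAt_zero φ₀ xs hφ₀sos hφ₀0
  have Dg : ∀ i, HasFDerivAt (fun x => φ i x * g i x) (φ i xs • fderiv ℝ (g i) xs) xs := by
    intro i
    have hdg := ((hg i).differentiable one_ne_zero xs).hasFDerivAt
    rcases mul_eq_zero.mp (hcompl i) with hc | hc
    · have hdφ : HasFDerivAt (φ i) (0 : (Fin n → ℝ) →L[ℝ] ℝ) xs :=
        sos_hasFDerivAt_zero (φ i) xs (hφsos i) hc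
      simpa using hdφ.fun_mul hdg
    · obtain ⟨K, σ, hσ, hφe⟩ := hφsos i
      have hdφ : DifferentiableAt ℝ (φ i) xs := by
        have hc1 : ContDiff ℝ 1 fun x => ∑ k, (σ k x) ^ 2 :=
          ContDiff.sum fun k _ => (hσ k).pow 2
        have heq : φ i = fun x => ∑ k, (σ k x) ^ 2 := funext hφe
        rw [heq]
        exact hc1.differentiable one_ne_zero xs
      simpa [hc] using hdφ.hasFDerivAt.fun_mul hdg
  have Dh : ∀ j, HasFDerivAt (fun x => ψ j x * h j x) (ψ j xs • fderiv ℝ (h j) xs) xs := by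
    intro j
    have hdψ := ((hψ j).differentiable one_ne_zero xs).hasFDerivAt
    have hdh := ((hh j).differentiable one_ne_zero xs).hasFDerivAt
    simpa [hhzero j] using hdψ.fun_mul hdh
  have Df : HasFDerivAt f
      ((0 : (Fin n → ℝ) →L[ℝ] ℝ) + ((∑ i, φ i xs • fderiv ℝ (g i) xs)
        + ∑ j, ψ j xs • fderiv ℝ (h j) xs)) xs := by
    have hfe : ∀ x, f x = fstar + (φ₀ x + ∑ i, φ i x * g i x + ∑ j, ψ j x * h j x) := by
      intro x; have := hid x; linarith
    have : HasFDerivAt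
        (fun x => fstar + (φ₀ x + ∑ i, φ i x * g i x + ∑ j, ψ j x * h j x))
        ((0 : (Fin n → ℝ) →L[ℝ] ℝ) + ((∑ i, φ i xs • fderiv ℝ (g i) xs)
          + ∑ j, ψ j xs • fderiv ℝ (h j) xs)) xs := by
      have hsg : HasFDerivAt (fun x => ∑ i, φ i x * g i x)
          (∑ i, φ i xs • fderiv ℝ (g i) xs) xs := HasFDerivAt.fun_sum fun i _ => Dg i
      have hsh : HasFDerivAt (fun x => ∑ j, ψ j x * h j x)
          (∑ j, ψ j xs • fderiv ℝ (h j) xs) xs := HasFDerivAt.fun_sum fun j _ => Dh j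
      have := ((D0.fun_add hsg).fun_add hsh).const_add fstar
      rw [add_assoc] at this
      exact this
    exact this.congr_of_eventuallyEq (Filter.Eventually.of_forall fun x => (hfe x))
  rw [Df.fderiv]
  abel
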